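/- Let S be a finite set, let q ∈ Σ_S, let f : S → ℝ satisfy 0 ≤ f(s) ≤ 1 for all s ∈ S, and let λ ≥ 0. Then log( Σ_{s∈S} q(s) · exp( λ·( qf − f(s) ) ) ) ≤ Var_q(f) · ( e^λ − λ − 1 ). -/

import Mathlib

open Finset

open Nat in


lemma exp_series_tail (x : ℝ) :
    Real.exp x - 1 - x = ∑' n : ℕ, x ^ (n + 2) / (n + 2).factorial := by
  have hsum : Summable (fun n : ℕ => x ^ n / n !) := Real.summable_pow_div_factorial x
  have hsum1 : Summable (fun n : ℕ => x ^ (n + 1) / (n + 1)!) :=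
    hsum.comp_injective (add_left_injective 1)
  have hexp : Real.exp x = ∑' n : ℕ, x ^ n / n ! := by
    rw [Real.exp_eq_exp_ℝ, NormedSpace.exp_eq_tsum_div]
  rw [hexp, Summable.tsum_eq_zero_add hsum, Summable.tsum_eq_zero_add hsum1]
  simp [Nat.factorial]

lemma exp_le_quadratic_of_nonpos {x : ℝ} (hx : x ≤ 0) :
    Real.exp x ≤ 1 + x + x ^ 2 / 2 := by
  have hg : ∀ t : ℝ, HasDerivAt (fun t : ℝ => 1 + t + t ^ 2 / 2 - Real.exp t)
      (1 + t - Real.exp t) t := by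
    intro t
    have h1 : HasDerivAt (fun t : ℝ => 1 + t) 1 t := (hasDerivAt_id t).const_add 1
    have h2 : HasDerivAt (fun t : ℝ => t ^ 2 / 2) t t := by
      simpa using (hasDerivAt_pow 2 t).div_const 2
    exact (h1.add h2).sub (Real.hasDerivAt_exp t)
  have hanti : Antitone (fun t : ℝ => 1 + t + t ^ 2 / 2 - Real.exp t) := by
    apply antitone_of_deriv_nonpos
    · exact fun t => (hg t).differentiableAt
    · intro t
      rw [(hg t).deriv]
      linarith [Real.add_one_le_exp t]
  have := hanti hx
  simp at this
  linarith

lemma key_ineq {x y : ℝ} (hy : 0 < y) (hxy : x ≤ y) :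
    y ^ 2 * (Real.exp x - 1 - x) ≤ x ^ 2 * (Real.exp y - y - 1) := by
  have hylb : 1 + y + y ^ 2 / 2 ≤ Real.exp y := by
    have := Real.sum_le_exp_of_nonneg hy.le 3
    simp [Finset.sum_range_succ, Nat.factorial] at this
    linarith
  rcases le_or_gt 0 x with hx | hx
  · rw [exp_series_tail x, show Real.exp y - y - 1 = Real.exp y - 1 - y by ring,
      exp_series_tail y, ← tsum_mul_left, ← tsum_mul_left]
    have hsx : Summable (fun n : ℕ => y ^ 2 * (x ^ (n + 2) / (n + 2).factorial)) :=
      ((Real.summable_pow_div_factorial x).comp_injective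
        (add_left_injective 2)).mul_left _
    have hsy : Summable (fun n : ℕ => x ^ 2 * (y ^ (n + 2) / (n + 2).factorial)) :=
      ((Real.summable_pow_div_factorial y).comp_injective
        (add_left_injective 2)).mul_left _
    refine Summable.tsum_le_tsum (fun n => ?_) hsx hsy
    have hfac : (0:ℝ) < (n + 2).factorial := by positivity
    have hxn : x ^ n ≤ y ^ n := pow_le_pow_left₀ hx hxy n
    have hnum : y ^ 2 * x ^ (n + 2) ≤ x ^ 2 * y ^ (n + 2) := by
      have h1 : y ^ 2 * x ^ (n + 2) = (x ^ 2 * y ^ 2) * x ^ n := by ring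
      have h2 : x ^ 2 * y ^ (n + 2) = (x ^ 2 * y ^ 2) * y ^ n := by ring
      rw [h1, h2]
      exact mul_le_mul_of_nonneg_left hxn (by positivity)
    rw [mul_div_assoc', mul_div_assoc']
    gcongr
  · have hC : Real.exp x - 1 - x ≤ x ^ 2 / 2 := by
      linarith [exp_le_quadratic_of_nonpos hx.le]
    calc y ^ 2 * (Real.exp x - 1 - x) ≤ y ^ 2 * (x ^ 2 / 2) := by
          apply mul_le_mul_of_nonneg_left hC (by positivity)
      _ ≤ x ^ 2 * (Real.exp y - y - 1) := by nlinarith [sq_nonneg x]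


/-- For `q` in the simplex over a finite set `S`, `f : S → ℝ` with values
in `[0,1]` and `λ ≥ 0`,
`log( Σ_s q(s) exp(λ (qf − f(s))) ) ≤ Var_q(f) (e^λ − λ − 1)`. -/
theorem log_mgf_bound {S : Type*} [Fintype S]
    (q : S → ℝ) (hq : ∀ s, 0 ≤ q s) (hqsum : ∑ s, q s = 1)
    (f : S → ℝ) (hf : ∀ s, 0 ≤ f s ∧ f s ≤ 1)
    (lam : ℝ) (hlam : 0 ≤ lam) :
    Real.log (∑ s, q s * Real.exp (lam * ((∑ s', q s' * f s') - f s)))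
      ≤ (∑ s, q s * (f s - ∑ s', q s' * f s') ^ 2) * (Real.exp lam - lam - 1) := by
  set μ := ∑ s', q s' * f s' with hμ
  rcases eq_or_lt_of_le hlam with h0 | hpos
  · simp [← h0, hqsum]
  · have hμ1 : μ ≤ 1 := by
      calc μ ≤ ∑ s, q s * 1 := Finset.sum_le_sum fun s _ =>
            mul_le_mul_of_nonneg_left (hf s).2 (hq s)
        _ = 1 := by simp [hqsum]
    -- pointwise bound
    have hpt : ∀ s, Real.exp (lam * (μ - f s)) ≤
        1 + lam * (μ - f s) + (μ - f s) ^ 2 * (Real.exp lam - lam - 1) := by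
      intro s
      have hx : lam * (μ - f s) ≤ lam := by
        have : μ - f s ≤ 1 := by linarith [(hf s).1]
        nlinarith
      have := key_ineq hpos hx
      have hl2 : (0:ℝ) < lam ^ 2 := by positivity
      rw [← sub_nonneg] at this ⊢
      have h2 : (lam * (μ - f s)) ^ 2 = lam ^ 2 * (μ - f s) ^ 2 := by ring
      nlinarith [this]
    have hsum_le : (∑ s, q s * Real.exp (lam * (μ - f s))) ≤
        1 + (∑ s, q s * (f s - μ) ^ 2) * (Real.exp lam - lam - 1) := by
      calc (∑ s, q s * Real.exp (lam * (μ - f s)))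
          ≤ ∑ s, q s * (1 + lam * (μ - f s) + (μ - f s) ^ 2 * (Real.exp lam - lam - 1)) :=
            Finset.sum_le_sum fun s _ => mul_le_mul_of_nonneg_left (hpt s) (hq s)
        _ = (∑ s, q s) + lam * ((∑ s, q s) * μ - ∑ s, q s * f s)
              + (∑ s, q s * (f s - μ) ^ 2) * (Real.exp lam - lam - 1) := by
            simp only [Finset.sum_mul, Finset.mul_sum, mul_sub,
              ← Finset.sum_sub_distrib, ← Finset.sum_add_distrib]
            exact Finset.sum_congr rfl fun s _ => by ring
        _ = 1 + (∑ s, q s * (f s - μ) ^ 2) * (Real.exp lam - lam - 1) := by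
            rw [hqsum, hμ]
            ring
    have hposum : 0 < ∑ s, q s * Real.exp (lam * (μ - f s)) := by
      have hex : ∃ s : S, s ∈ Finset.univ ∧ 0 < q s * Real.exp (lam * (μ - f s)) := by
        by_contra h
        push_neg at h
        have : ∑ s, q s = 0 := by
          apply Finset.sum_eq_zero
          intro s _
          have h1 := h s (Finset.mem_univ s)
          have h2 : 0 ≤ q s * Real.exp (lam * (μ - f s)) :=
            mul_nonneg (hq s) (Real.exp_pos _).le
          have h3 : q s * Real.exp (lam * (μ - f s)) = 0 := le_antisymm h1 h2
          rcases mul_eq_zero.1 h3 with h | h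
          · exact h
          · exact absurd h (Real.exp_pos _).ne'
        rw [hqsum] at this; norm_num at this
      exact Finset.sum_pos' (fun s _ => mul_nonneg (hq s) (Real.exp_pos _).le) hex
    calc Real.log (∑ s, q s * Real.exp (lam * (μ - f s)))
        ≤ (∑ s, q s * Real.exp (lam * (μ - f s))) - 1 :=
          Real.log_le_sub_one_of_pos hposum
      _ ≤ (∑ s, q s * (f s - μ) ^ 2) * (Real.exp lam - lam - 1) := by linarith
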